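/- Let (X,d,W) be a UCW-hyperbolic space with monotone modulus of uniform convexity η, C ⊆ X a nonempty convex subset, T : C → C nonexpansive with a fixed point, (λ_n) a sequence in [0,1], and (x_n) the Krasnoselski–Mann iteration starting with x ∈ C. Suppose θ : ℕ → ℕ is a rate of divergence for Σ_{n=0}^∞ λ_n(1−λ_n), and b > 0 satisfies b ≥ d(x,p) for some fixed point p of T. Then lim_{n→∞} d(x_n, Tx_n) = 0, and for all ε > 0 and all n ≥ Φ(ε,η,b,θ) one has d(x_n, Tx_n) < ε, where Φ(ε,η,b,θ) := θ(⌈(b+1)/(ε·η(b, ε/b))⌉) if ε ≤ 2b and Φ(ε,η,b,θ) := 0 otherwise. -/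

import Mathlib

open Set Filter Metric Bornology Function

/-- A `W`-hyperbolic space structure on a metric space `X` (Kohlenbach).
`W x y l` denotes `(1-l)x ⊕ l y`. -/
structure WHyp (X : Type*) [MetricSpace X] where
  W : X → X → ℝ → X
  W1 : ∀ (x y z : X), ∀ l ∈ Set.Icc (0:ℝ) 1,
    dist z (W x y l) ≤ (1 - l) * dist z x + l * dist z y
  W2 : ∀ (x y : X), ∀ l ∈ Set.Icc (0:ℝ) 1, ∀ l' ∈ Set.Icc (0:ℝ) 1,
    dist (W x y l) (W x y l') = |l - l'| * dist x y
  W3 : ∀ (x y : X), ∀ l ∈ Set.Icc (0:ℝ) 1, W x y l = W y x (1 - l)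
  W4 : ∀ (x y z w : X), ∀ l ∈ Set.Icc (0:ℝ) 1,
    dist (W x z l) (W y w l) ≤ (1 - l) * dist x y + l * dist z w

/-- `η` is a modulus of uniform convexity for the `W`-hyperbolic space `H`. -/
def WHyp.UnifConvex {X : Type*} [MetricSpace X] (H : WHyp X) (η : ℝ → ℝ → ℝ) : Prop :=
  (∀ r ε : ℝ, 0 < r → ε ∈ Set.Ioc (0:ℝ) 2 → η r ε ∈ Set.Ioc (0:ℝ) 1) ∧
  (∀ (r ε : ℝ) (a x y : X), 0 < r → ε ∈ Set.Ioc (0:ℝ) 2 →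
    dist x a ≤ r → dist y a ≤ r → ε * r ≤ dist x y →
    dist (H.W x y (1/2)) a ≤ (1 - η r ε) * r)

/-- A modulus of uniform convexity is monotone if it decreases in `r` for fixed `ε`. -/
def MonotoneModulus (η : ℝ → ℝ → ℝ) : Prop :=
  ∀ r s ε : ℝ, 0 < r → r ≤ s → ε ∈ Set.Ioc (0:ℝ) 2 → η s ε ≤ η r ε

/-- A subset `C` is convex in the `W`-hyperbolic space `H`. -/
def WHyp.ConvexSet {X : Type*} [MetricSpace X] (H : WHyp X) (C : Set X) : Prop :=
  ∀ x ∈ C, ∀ y ∈ C, ∀ l ∈ Set.Icc (0:ℝ) 1, H.W x y l ∈ C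

/-- The Krasnoselski–Mann iteration: `x₀ = x`, `x_{n+1} = (1-λ_n)x_n ⊕ λ_n T x_n`. -/
def WHyp.kmSeq {X : Type*} [MetricSpace X] (H : WHyp X) (T : X → X) (l : ℕ → ℝ)
    (x : X) : ℕ → X
  | 0 => x
  | n + 1 => H.W (H.kmSeq T l x n) (T (H.kmSeq T l x n)) (l n)

/-- The bound `h(ε,k,η,b,θ)` from Proposition 4.4 of the paper. -/
noncomputable def hRate (η : ℝ → ℝ → ℝ) (b : ℝ) (θ : ℕ → ℕ) (ε : ℝ) (k : ℕ) : ℕ :=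
  if ε ≤ 2 * b then θ (⌈(b + 1) / (ε * η b (ε / b))⌉₊ + k) else k

section Aux
variable {X : Type*} [MetricSpace X] (H : WHyp X)

lemma WHyp.W_zero (x y : X) : H.W x y 0 = x := by
  have h := H.W1 x y x 0 (by constructor <;> norm_num)
  have h2 : dist x (H.W x y 0) ≤ 0 := by simpa using h
  exact (dist_eq_zero.mp (le_antisymm h2 dist_nonneg)).symm

lemma WHyp.W_one (x y : X) : H.W x y 1 = y := by
  have h := H.W1 x y y 1 (by constructor <;> norm_num)
  have h2 : dist y (H.W x y 1) ≤ 0 := by simpa using h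
  exact (dist_eq_zero.mp (le_antisymm h2 dist_nonneg)).symm

lemma WHyp.dist_left (x y : X) {l : ℝ} (hl : l ∈ Set.Icc (0:ℝ) 1) :
    dist x (H.W x y l) = l * dist x y := by
  have h := H.W2 x y l hl 0 (by constructor <;> norm_num)
  rw [H.W_zero, dist_comm] at h
  rw [h, sub_zero, abs_of_nonneg hl.1]

lemma WHyp.dist_right (x y : X) {l : ℝ} (hl : l ∈ Set.Icc (0:ℝ) 1) :
    dist (H.W x y l) y = (1 - l) * dist x y := by
  have h := H.W2 x y l hl 1 (by constructor <;> norm_num)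
  rw [H.W_one] at h
  rw [h, abs_sub_comm, abs_of_nonneg (by linarith [hl.2])]

end Aux

section Aux2
variable {X : Type*} [MetricSpace X] (H : WHyp X) {η : ℝ → ℝ → ℝ}

lemma WHyp.unique_ratio (hU : H.UnifConvex η) (x y w c : X) {l : ℝ}
    (hl : l ∈ Set.Icc (0:ℝ) 1)
    (hxw : dist x w = l * dist x y) (hwy : dist w y = (1 - l) * dist x y)
    (hxc : dist x c = l * dist x y) (hcy : dist c y = (1 - l) * dist x y) : w = c := by
  by_contra hne
  have hδ : 0 < dist w c := dist_pos.mpr hne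
  have hd0 : 0 < dist x y := by
    rcases (dist_nonneg : 0 ≤ dist x y).lt_or_eq with h | h
    · exact h
    · exfalso; apply hne
      have hw : w = x := by
        have : dist x w = 0 := by rw [hxw, ← h]; ring
        exact (dist_eq_zero.mp this).symm
      have hc : c = x := by
        have : dist x c = 0 := by rw [hxc, ← h]; ring
        exact (dist_eq_zero.mp this).symm
      rw [hw, hc]
  have hl0 : 0 < l := by
    rcases hl.1.lt_or_eq with h | h
    · exact h
    · exfalso; apply hne
      have hw : w = x := by
        have : dist x w = 0 := by rw [hxw, ← h]; ring
        exact (dist_eq_zero.mp this).symm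
      have hc : c = x := by
        have : dist x c = 0 := by rw [hxc, ← h]; ring
        exact (dist_eq_zero.mp this).symm
      rw [hw, hc]
  have hl1 : l < 1 := by
    rcases hl.2.lt_or_eq with h | h
    · exact h
    · exfalso; apply hne
      have hw : w = y := by
        have : dist w y = 0 := by rw [hwy, h]; ring
        exact dist_eq_zero.mp this
      have hc : c = y := by
        have : dist c y = 0 := by rw [hcy, h]; ring
        exact dist_eq_zero.mp this
      rw [hw, hc]
  set d := dist x y with hd
  set z := H.W w c (1/2) with hz
  have hr1 : (0:ℝ) < l * d := by positivity
  have hr2 : (0:ℝ) < (1 - l) * d := by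
    have : 0 < 1 - l := by linarith
    positivity
  -- distance from z to x
  have h1 : dist z x < l * d := by
    have hε : dist w c / (l * d) ∈ Set.Ioc (0:ℝ) 2 := by
      constructor
      · positivity
      · rw [div_le_iff₀ hr1]
        have : dist w c ≤ dist w x + dist x c := dist_triangle _ _ _
        rw [dist_comm w x] at this
        rw [hxw, hxc] at this
        linarith
    have hη := hU.1 (l * d) _ hr1 hε
    have h := hU.2 (l * d) (dist w c / (l * d)) x w c hr1 hε
      (by rw [dist_comm, hxw]) (by rw [dist_comm, hxc])
      (by rw [div_mul_cancel₀ _ hr1.ne'])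
    calc dist z x ≤ (1 - η (l*d) (dist w c / (l*d))) * (l * d) := h
      _ < 1 * (l * d) := by
          apply mul_lt_mul_of_pos_right _ hr1
          linarith [hη.1]
      _ = l * d := one_mul _
  -- distance from z to y
  have h2 : dist z y < (1 - l) * d := by
    have hε : dist w c / ((1 - l) * d) ∈ Set.Ioc (0:ℝ) 2 := by
      constructor
      · positivity
      · rw [div_le_iff₀ hr2]
        have : dist w c ≤ dist w y + dist y c := dist_triangle _ _ _
        rw [dist_comm y c] at this
        rw [hwy, hcy] at this
        linarith
    have hη := hU.1 ((1 - l) * d) _ hr2 hε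
    have h := hU.2 ((1 - l) * d) (dist w c / ((1 - l) * d)) y w c hr2 hε
      (le_of_eq hwy) (le_of_eq hcy)
      (by rw [div_mul_cancel₀ _ hr2.ne'])
    calc dist z y ≤ (1 - η ((1-l)*d) (dist w c / ((1-l)*d))) * ((1 - l) * d) := h
      _ < 1 * ((1 - l) * d) := by
          apply mul_lt_mul_of_pos_right _ hr2
          linarith [hη.1]
      _ = (1 - l) * d := one_mul _
  have := dist_triangle x z y
  rw [dist_comm x z] at this
  have : d ≤ dist z x + dist z y := by rw [hd]; exact this
  linarith

lemma WHyp.genUC_half (hU : H.UnifConvex η) {r ε : ℝ} (hr : 0 < r)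
    (hε : ε ∈ Set.Ioc (0:ℝ) 2) (a x y : X)
    (hx : dist x a ≤ r) (hy : dist y a ≤ r) (hxy : ε * r ≤ dist x y)
    {l : ℝ} (hl0 : 0 ≤ l) (hl2 : l ≤ 1/2) :
    dist (H.W x y l) a ≤ (1 - 2*l*(1-l) * η r ε) * r := by
  have hη := hU.1 r ε hr hε
  have hlI : l ∈ Set.Icc (0:ℝ) 1 := ⟨hl0, by linarith⟩
  have hmemh : (1/2 : ℝ) ∈ Set.Icc (0:ℝ) 1 := by constructor <;> norm_num
  have h2l : (2*l) ∈ Set.Icc (0:ℝ) 1 := ⟨by linarith, by linarith⟩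
  have hd : 0 < dist x y := lt_of_lt_of_le (mul_pos hε.1 hr) hxy
  set m := H.W x y (1/2) with hm
  have hxm : dist x m = (1/2) * dist x y := H.dist_left x y hmemh
  have hmy : dist m y = (1/2) * dist x y := by
    have := H.dist_right x y hmemh
    rw [this]; norm_num
  set c := H.W x m (2*l) with hc
  have hxc : dist x c = l * dist x y := by
    rw [hc, H.dist_left x m h2l, hxm]; ring
  have hcm : dist c m = (1 - 2*l) * ((1/2) * dist x y) := by
    rw [hc, H.dist_right x m h2l, hxm]
  have hcy : dist c y = (1 - l) * dist x y := by
    have hub : dist c y ≤ (1 - l) * dist x y := by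
      calc dist c y ≤ dist c m + dist m y := dist_triangle _ _ _
        _ = (1 - l) * dist x y := by rw [hcm, hmy]; ring
    have hlb : dist x y ≤ dist x c + dist c y := dist_triangle _ _ _
    have : (1 - l) * dist x y ≤ dist c y := by rw [hxc] at hlb; linarith
    linarith
  have hwc : H.W x y l = c :=
    H.unique_ratio hU x y _ c hlI (H.dist_left x y hlI) (H.dist_right x y hlI) hxc hcy
  have hma : dist m a ≤ (1 - η r ε) * r := hU.2 r ε a x y hr hε hx hy hxy
  have hca : dist a c ≤ (1 - 2*l) * dist a x + (2*l) * dist a m := H.W1 x m a (2*l) h2l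
  rw [hwc, dist_comm]
  have step : dist a c ≤ (1 - 2*l) * r + 2*l * ((1 - η r ε) * r) := by
    refine le_trans hca (add_le_add ?_ ?_)
    · apply mul_le_mul_of_nonneg_left _ (by linarith)
      rw [dist_comm]; exact hx
    · apply mul_le_mul_of_nonneg_left _ (by linarith)
      rw [dist_comm]; exact hma
  have hnn : 0 ≤ l * l * (η r ε * r) := mul_nonneg (mul_nonneg hl0 hl0) (mul_nonneg hη.1.le hr.le)
  nlinarith [hη.1, hη.2, hr.le]

lemma WHyp.genUC (hU : H.UnifConvex η) {r ε : ℝ} (hr : 0 < r)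
    (hε : ε ∈ Set.Ioc (0:ℝ) 2) (a x y : X)
    (hx : dist x a ≤ r) (hy : dist y a ≤ r) (hxy : ε * r ≤ dist x y)
    {l : ℝ} (hl : l ∈ Set.Icc (0:ℝ) 1) :
    dist (H.W x y l) a ≤ (1 - 2*l*(1-l) * η r ε) * r := by
  rcases le_or_gt l (1/2) with h | h
  · exact H.genUC_half hU hr hε a x y hx hy hxy hl.1 h
  · rw [H.W3 x y l hl]
    have h' := H.genUC_half hU hr hε a y x hy hx (by rwa [dist_comm])
      (l := 1 - l) (by linarith [hl.2]) (by linarith)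
    calc dist (H.W y x (1-l)) a ≤ (1 - 2*(1-l)*(1-(1-l)) * η r ε) * r := h'
      _ = (1 - 2*l*(1-l) * η r ε) * r := by ring

end Aux2

section Km
variable {X : Type*} [MetricSpace X] (H : WHyp X)

lemma WHyp.kmSeq_zero (T : X → X) (l : ℕ → ℝ) (x : X) : H.kmSeq T l x 0 = x := rfl

lemma WHyp.kmSeq_succ (T : X → X) (l : ℕ → ℝ) (x : X) (n : ℕ) :
    H.kmSeq T l x (n+1) = H.W (H.kmSeq T l x n) (T (H.kmSeq T l x n)) (l n) := rfl

end Km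

theorem stmt17 {X : Type*} [MetricSpace X] (H : WHyp X)
    (η : ℝ → ℝ → ℝ) (hU : H.UnifConvex η) (hmon : MonotoneModulus η)
    (C : Set X) (hCne : C.Nonempty) (hCconv : H.ConvexSet C)
    (T : X → X) (hT : Set.MapsTo T C C)
    (hTne : ∀ x ∈ C, ∀ y ∈ C, dist (T x) (T y) ≤ dist x y)
    (l : ℕ → ℝ) (hl : ∀ n, l n ∈ Set.Icc (0:ℝ) 1)
    (x : X) (hx : x ∈ C) (xs : ℕ → X) (hxs : xs = H.kmSeq T l x)
    (θ : ℕ → ℕ)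
    (hθ : ∀ n : ℕ, (n : ℝ) ≤ ∑ i ∈ Finset.range (θ n + 1), l i * (1 - l i))
    (b : ℝ) (hb : 0 < b) (hbp : ∃ p ∈ C, T p = p ∧ dist x p ≤ b) :
    Filter.Tendsto (fun n => dist (xs n) (T (xs n))) Filter.atTop (nhds 0) ∧
    ∀ ε : ℝ, 0 < ε → ∀ n, hRate η b θ ε 0 ≤ n → dist (xs n) (T (xs n)) < ε := by
  subst hxs
  obtain ⟨p, hpC, hTp, hxp⟩ := hbp
  set k := H.kmSeq T l x with hk
  have hmem : ∀ n, k n ∈ C := by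
    intro n; induction n with
    | zero => exact hx
    | succ n ih =>
      rw [hk, H.kmSeq_succ]
      exact hCconv _ ih _ (hT ih) _ (hl n)
  have hdp : ∀ n, dist (T (k n)) p ≤ dist (k n) p := by
    intro n
    have h := hTne (k n) (hmem n) p hpC
    rwa [hTp] at h
  have hstep : ∀ n, dist (k (n+1)) p ≤ dist (k n) p := by
    intro n
    have h1 := H.W1 (k n) (T (k n)) p (l n) (hl n)
    rw [dist_comm p (k n), dist_comm p (T (k n))] at h1
    have h2 : dist (k (n+1)) p = dist p (H.W (k n) (T (k n)) (l n)) := by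
      rw [hk, H.kmSeq_succ, dist_comm]
    rw [h2]
    have := mul_le_mul_of_nonneg_left (hdp n) (hl n).1
    linarith [h1, this]
  have hdb : ∀ n, dist (k n) p ≤ b := by
    intro n; induction n with
    | zero => exact hxp
    | succ n ih => exact le_trans (hstep n) ih
  have hg : ∀ n, dist (k (n+1)) (T (k (n+1))) ≤ dist (k n) (T (k n)) := by
    intro n
    have hv : k (n+1) = H.W (k n) (T (k n)) (l n) := by rw [hk, H.kmSeq_succ]
    have h1 : dist (k (n+1)) (T (k n)) = (1 - l n) * dist (k n) (T (k n)) := by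
      rw [hv]; exact H.dist_right _ _ (hl n)
    have h2 : dist (k n) (k (n+1)) = (l n) * dist (k n) (T (k n)) := by
      rw [hv]; exact H.dist_left _ _ (hl n)
    have h3 : dist (T (k n)) (T (k (n+1))) ≤ dist (k n) (k (n+1)) :=
      hTne _ (hmem n) _ (hmem (n+1))
    calc dist (k (n+1)) (T (k (n+1)))
        ≤ dist (k (n+1)) (T (k n)) + dist (T (k n)) (T (k (n+1))) := dist_triangle _ _ _
      _ ≤ (1 - l n) * dist (k n) (T (k n)) + (l n) * dist (k n) (T (k n)) := by
          rw [h1]; exact add_le_add_right (le_trans h3 (le_of_eq h2)) _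
      _ = dist (k n) (T (k n)) := by ring
  have hgmono : ∀ m n, m ≤ n → dist (k n) (T (k n)) ≤ dist (k m) (T (k m)) := by
    intro m n hmn
    induction n with
    | zero => rw [Nat.le_zero.mp hmn]
    | succ n ih =>
      rcases Nat.lt_or_ge m (n+1) with h | h
      · exact le_trans (hg n) (ih (Nat.lt_succ_iff.mp h))
      · rw [Nat.le_antisymm hmn h]
  have hgdb : ∀ n, dist (k n) (T (k n)) ≤ 2 * dist (k n) p := by
    intro n
    calc dist (k n) (T (k n)) ≤ dist (k n) p + dist p (T (k n)) := dist_triangle _ _ _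
      _ ≤ 2 * dist (k n) p := by rw [dist_comm p]; linarith [hdp n]
  have main : ∀ ε : ℝ, 0 < ε → ∀ n, hRate η b θ ε 0 ≤ n →
      dist (k n) (T (k n)) < ε := by
    intro ε hε n hn
    by_cases hcase : ε ≤ 2 * b
    · have hεb : ε / b ∈ Set.Ioc (0:ℝ) 2 := ⟨div_pos hε hb, by rw [div_le_iff₀ hb]; linarith⟩
      have heI := hU.1 b (ε / b) hb hεb
      set e := η b (ε / b) with he
      set K := ⌈(b + 1) / (ε * e)⌉₊ with hK
      have hRdef : hRate η b θ ε 0 = θ K := by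
        rw [hRate, if_pos hcase]
        rfl
      have hθK : θ K ≤ n := le_trans (le_of_eq hRdef.symm) hn
      by_contra hcon
      push_neg at hcon
      have hall : ∀ m, m ≤ n → ε ≤ dist (k m) (T (k m)) :=
        fun m hm => le_trans hcon (hgmono m n hm)
      have key : ∀ m, ε ≤ dist (k m) (T (k m)) →
          dist (k (m+1)) p ≤ dist (k m) p - l m * (1 - l m) * (ε * e) := by
        intro m hgm
        have hrm : ε / 2 ≤ dist (k m) p := by linarith [hgdb m]
        have hr0 : 0 < dist (k m) p := lt_of_lt_of_le (by linarith) hrm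
        have hxy : (ε / b) * dist (k m) p ≤ dist (k m) (T (k m)) := by
          have h1 : (ε / b) * dist (k m) p ≤ (ε / b) * b :=
            mul_le_mul_of_nonneg_left (hdb m) hεb.1.le
          rw [div_mul_cancel₀ _ hb.ne'] at h1
          linarith
        have hB := H.genUC hU hr0 hεb p (k m) (T (k m)) le_rfl (hdp m) hxy (hl m)
        have hmon' : e ≤ η (dist (k m) p) (ε / b) := hmon _ b _ hr0 (hdb m) hεb
        have hll : 0 ≤ l m * (1 - l m) := mul_nonneg (hl m).1 (by linarith [(hl m).2])
        have hkm1 : dist (k (m+1)) p = dist (H.W (k m) (T (k m)) (l m)) p := by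
          rw [hk, H.kmSeq_succ]
        rw [hkm1]
        have hA : 0 ≤ l m * (1 - l m) * ((η (dist (k m) p) (ε/b) - e) * dist (k m) p) :=
          mul_nonneg hll (mul_nonneg (by linarith) hr0.le)
        have hB2 : 0 ≤ l m * (1 - l m) * (e * (dist (k m) p - ε / 2)) :=
          mul_nonneg hll (mul_nonneg heI.1.le (by linarith))
        nlinarith [hB]
      have tel : ∀ N : ℕ, (∀ m, m ≤ N → ε ≤ dist (k m) (T (k m))) →
          dist (k (N+1)) p ≤ dist (k 0) p -
            (∑ i ∈ Finset.range (N+1), l i * (1 - l i)) * (ε * e) := by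
        intro N
        induction N with
        | zero =>
          intro hh
          have := key 0 (hh 0 le_rfl)
          simpa using this
        | succ N ih =>
          intro hh
          have h1 := ih (fun m hm => hh m (le_trans hm (Nat.le_succ N)))
          have h2 := key (N+1) (hh (N+1) le_rfl)
          rw [Finset.sum_range_succ]
          nlinarith [h1, h2]
      have htel := tel (θ K) (fun m hm => hall m (le_trans hm hθK))
      have hd0 : dist (k 0) p ≤ b := hxp
      have hεe : 0 < ε * e := mul_pos hε heI.1
      have hKge : (b + 1) / (ε * e) ≤ (K : ℝ) := Nat.le_ceil _
      have hsum := hθ K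
      have hbig : b + 1 ≤ (∑ i ∈ Finset.range (θ K + 1), l i * (1 - l i)) * (ε * e) := by
        have h5 : (b + 1) / (ε * e) ≤ ∑ i ∈ Finset.range (θ K + 1), l i * (1 - l i) :=
          le_trans hKge hsum
        calc b + 1 = ((b + 1) / (ε * e)) * (ε * e) := (div_mul_cancel₀ _ hεe.ne').symm
          _ ≤ _ := mul_le_mul_of_nonneg_right h5 hεe.le
      have hnn : (0:ℝ) ≤ dist (k (θ K + 1)) p := dist_nonneg
      linarith [htel, hbig, hnn, hd0]
    · push_neg at hcase
      calc dist (k n) (T (k n)) ≤ 2 * dist (k n) p := hgdb n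
        _ ≤ 2 * b := by linarith [hdb n]
        _ < ε := hcase
  refine ⟨?_, main⟩
  rw [Metric.tendsto_atTop]
  intro ε hε
  refine ⟨hRate η b θ ε 0, fun n hn => ?_⟩
  rw [Real.dist_eq, sub_zero, abs_of_nonneg dist_nonneg]
  exact main ε hε n hn
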